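/- Let r ≥ 1, let ω_1, …, ω_r be complex numbers with Re(ω_j) > 0 for all j, and let z be a complex number with Re(z) > 0. Then for every complex number s with Re(s) > r, the Barnes multiple zeta series ∑_{n_1,…,n_r = 0}^∞ (z + n_1ω_1 + ⋯ + n_rω_r)^{-s} converges absolutely, where each complex power is taken with the principal branch. -/

import Mathlib

open Complex Filter Topology

lemma summable_pi_prod {g : ℕ → ℝ} (hg0 : ∀ m, 0 ≤ g m) (hg : Summable g) (r : ℕ) :
    Summable (fun n : Fin r → ℕ => ∏ j, g (n j)) := by
  induction r with
  | zero => simp; exact summable_of_finite_support (Set.toFinite _)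
  | succ r ih =>
      have h := hg.mul_of_nonneg ih hg0 (fun n => Finset.prod_nonneg fun j _ => hg0 _)
      have := h.comp_injective (Fin.consEquiv (fun _ : Fin (r+1) => ℕ)).symm.injective
      refine this.congr fun n => ?_
      simp [Fin.prod_univ_succ, Fin.consEquiv, Fin.tail]

/-- Absolute convergence of the Barnes multiple zeta series: for `Re z > 0`,
`Re ω_j > 0` and `Re s > r`, the series `∑_{n₁,…,n_r ≥ 0} (z + n₁ω₁ + ⋯ + n_rω_r)^{-s}`
converges absolutely (principal-branch complex powers). -/
theorem barnesZeta_abs_convergence (r : ℕ) (hr : 1 ≤ r) (ω : Fin r → ℂ)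
    (hω : ∀ j, 0 < (ω j).re) (z : ℂ) (hz : 0 < z.re) (s : ℂ) (hs : (r : ℝ) < s.re) :
    Summable (fun n : Fin r → ℕ => ‖(z + ∑ j, (n j : ℂ) * ω j) ^ (-s)‖) := by
  set p := s.re with hp
  have hp0 : 0 < p := lt_of_le_of_lt (by exact_mod_cast Nat.zero_le r) hs
  have hrpos : (0:ℝ) < r := by exact_mod_cast hr
  haveI : NeZero r := ⟨by omega⟩
  set δ : ℝ := min z.re (Finset.univ.inf' Finset.univ_nonempty (fun j => (ω j).re)) with hδ
  have hδpos : 0 < δ := by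
    refine lt_min hz ?_
    rw [Finset.lt_inf'_iff]
    exact fun j _ => hω j
  have hδz : δ ≤ z.re := min_le_left _ _
  have hδω : ∀ j, δ ≤ (ω j).re := fun j =>
    (min_le_right _ _).trans (Finset.inf'_le _ (Finset.mem_univ j))
  have hre : ∀ n : Fin r → ℕ, δ * (1 + ∑ j, (n j : ℝ)) ≤ (z + ∑ j, (n j : ℂ) * ω j).re := by
    intro n
    have : (z + ∑ j, (n j : ℂ) * ω j).re = z.re + ∑ j, (n j : ℝ) * (ω j).re := by
      simp [Complex.add_re, Complex.re_sum]
    rw [this, mul_add, mul_one, Finset.mul_sum]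
    refine add_le_add hδz (Finset.sum_le_sum fun j _ => ?_)
    rw [mul_comm δ]
    exact mul_le_mul_of_nonneg_left (hδω j) (Nat.cast_nonneg _)
  have hwpos : ∀ n : Fin r → ℕ, 0 < (z + ∑ j, (n j : ℂ) * ω j).re := fun n =>
    lt_of_lt_of_le (by positivity) (hre n)
  set q : ℝ := p / r with hq
  have hq1 : 1 < q := (lt_div_iff₀ hrpos).mpr (by rw [one_mul]; exact hs)
  have hgsum : Summable (fun m : ℕ => ((m : ℝ) + 1) ^ (-q)) := by
    have := (summable_nat_add_iff (f := fun m : ℕ => (m : ℝ) ^ (-q)) 1).mpr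
      (Real.summable_nat_rpow.mpr (by linarith))
    exact this.congr fun m => by push_cast; ring_nf
  have hg0 : ∀ m : ℕ, 0 ≤ ((m : ℝ) + 1) ^ (-q) := fun m => Real.rpow_nonneg (by positivity) _
  set C : ℝ := Real.exp (Real.pi * |s.im|) * δ ^ (-p) with hC
  have hC0 : 0 ≤ C := mul_nonneg (Real.exp_pos _).le (Real.rpow_nonneg hδpos.le _)
  refine Summable.of_nonneg_of_le (fun n => norm_nonneg _)
    (fun n => ?_) (((summable_pi_prod hg0 hgsum r).mul_left C))
  set w : ℂ := z + ∑ j, (n j : ℂ) * ω j with hw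
  have hwre : 0 < w.re := hwpos n
  have hwne : w ≠ 0 := by
    intro h; rw [h] at hwre; simp at hwre
  have habs : ‖w ^ (-s)‖ ≤ Real.exp (Real.pi * |s.im|) * ‖w‖ ^ (-p) := by
    rw [Complex.norm_cpow_of_ne_zero hwne, div_le_iff₀ (Real.exp_pos _)]
    rw [neg_re, mul_comm (Real.exp _), mul_assoc, ← Real.exp_add]
    have hnn : (0:ℝ) ≤ Real.pi * |s.im| + w.arg * (-s).im := by
      rw [neg_im]
      have h1 : |w.arg * (-s.im)| ≤ Real.pi * |s.im| := by
        rw [abs_mul, abs_neg]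
        exact mul_le_mul_of_nonneg_right (Complex.abs_arg_le_pi w) (abs_nonneg _)
      linarith [neg_abs_le (w.arg * (-s.im))]
    calc ‖w‖ ^ (-p) = ‖w‖ ^ (-p) * 1 := (mul_one _).symm
      _ ≤ ‖w‖ ^ (-p) * Real.exp (Real.pi * |s.im| + w.arg * (-s).im) :=
          mul_le_mul_of_nonneg_left (Real.one_le_exp hnn)
            (Real.rpow_nonneg (norm_nonneg _) _)
  have habsge : δ * (1 + ∑ j, (n j : ℝ)) ≤ ‖w‖ :=
    (hre n).trans (Complex.re_le_norm w)
  have hSpos : (0:ℝ) < 1 + ∑ j, (n j : ℝ) := by positivity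
  have h2 : ‖w‖ ^ (-p) ≤ (δ * (1 + ∑ j, (n j : ℝ))) ^ (-p) :=
    Real.rpow_le_rpow_of_nonpos (by positivity) habsge (neg_nonpos.mpr hp0.le)
  have h3 : (δ * (1 + ∑ j, (n j : ℝ))) ^ (-p) = δ ^ (-p) * (1 + ∑ j, (n j : ℝ)) ^ (-p) :=
    Real.mul_rpow hδpos.le hSpos.le
  have hppos : ∀ j, (0:ℝ) < (n j : ℝ) + 1 := fun j => by positivity
  have hprodpos : (0:ℝ) < ∏ j, ((n j : ℝ) + 1) := Finset.prod_pos fun j _ => hppos j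
  have h4 : (1 + ∑ j, (n j : ℝ)) ^ (-p) ≤ ∏ j, ((n j : ℝ) + 1) ^ (-q) := by
    have hprod : ∏ j, ((n j : ℝ) + 1) ≤ (1 + ∑ j, (n j : ℝ)) ^ (r : ℕ) := by
      have hconst : (1 + ∑ j, (n j : ℝ)) ^ (r : ℕ) = ∏ _j : Fin r, (1 + ∑ j, (n j : ℝ)) := by
        rw [Finset.prod_const, Finset.card_univ, Fintype.card_fin]
      rw [hconst]
      refine Finset.prod_le_prod (fun j _ => by positivity) (fun j _ => ?_)
      have := Finset.single_le_sum (f := fun j => (n j : ℝ)) (fun j _ => Nat.cast_nonneg _)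
        (Finset.mem_univ j)
      linarith
    have key : (∏ j, ((n j : ℝ) + 1)) ^ q ≤ (1 + ∑ j, (n j : ℝ)) ^ p := by
      calc (∏ j, ((n j : ℝ) + 1)) ^ q ≤ ((1 + ∑ j, (n j : ℝ)) ^ (r:ℕ)) ^ q :=
            Real.rpow_le_rpow hprodpos.le hprod (by positivity)
        _ = (1 + ∑ j, (n j : ℝ)) ^ p := by
            rw [← Real.rpow_natCast (1 + ∑ j, (n j : ℝ)) r, ← Real.rpow_mul hSpos.le]
            congr 1
            rw [hq]; field_simp
    rw [Real.finset_prod_rpow _ _ (fun j _ => (hppos j).le) (-q),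
        Real.rpow_neg hSpos.le, Real.rpow_neg hprodpos.le]
    exact inv_anti₀ (Real.rpow_pos_of_pos hprodpos q) key
  calc ‖w ^ (-s)‖ ≤ Real.exp (Real.pi * |s.im|) * ‖w‖ ^ (-p) := habs
    _ ≤ Real.exp (Real.pi * |s.im|) * (δ * (1 + ∑ j, (n j : ℝ))) ^ (-p) :=
        mul_le_mul_of_nonneg_left h2 (Real.exp_pos _).le
    _ = C * (1 + ∑ j, (n j : ℝ)) ^ (-p) := by rw [h3, hC]; ring
    _ ≤ C * ∏ j, ((n j : ℝ) + 1) ^ (-q) := mul_le_mul_of_nonneg_left h4 hC0
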